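/- Let a ∈ ℂ with |a| = 1, and let R(a) be the 4×4 complex matrix, with rows and columns indexed by Fin 2 × Fin 2 in lexicographic order, given by R(a) = [[a, 0, 0, 0], [0, 0, a⁻¹, 0], [0, a⁻¹, a − a⁻³, 0], [0, 0, 0, a]]. Then: (i) R(a) satisfies the Yang–Baxter equation (R ⊗ I₂)(I₂ ⊗ R)(R ⊗ I₂) = (I₂ ⊗ R)(R ⊗ I₂)(I₂ ⊗ R) as 8×8 matrices (Kronecker products, indexed by Fin 2 × Fin 2 × Fin 2); and (ii) R(a) is unitary if and only if a⁴ = 1, i.e. if and only if a ∈ {1, −1, i, −i}. -/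

import Mathlib

open Matrix Complex

/-- Lexicographic encoding of `Fin 2 × Fin 2` into `Fin 4`. -/
def enc22 : Fin 2 × Fin 2 → Fin 4 :=
  fun p => ⟨2 * p.1.val + p.2.val, by have := p.1.isLt; have := p.2.isLt; omega⟩

/-- The `4 × 4` matrix `R(a)`, with rows and columns indexed by `Fin 2 × Fin 2`
in lexicographic order. -/
noncomputable def RYB (a : ℂ) : Matrix (Fin 2 × Fin 2) (Fin 2 × Fin 2) ℂ :=
  fun p q =>
    (!![a, 0,   0,            0;
        0, 0,   a⁻¹,          0;
        0, a⁻¹, a - a⁻¹ ^ 3,  0;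
        0, 0,   0,            a] : Matrix (Fin 4) (Fin 4) ℂ) (enc22 p) (enc22 q)

/-- `R(a) ⊗ I₂`, reassociated to a matrix indexed by `Fin 2 × Fin 2 × Fin 2`. -/
noncomputable def RYB12 (a : ℂ) : Matrix (Fin 2 × Fin 2 × Fin 2) (Fin 2 × Fin 2 × Fin 2) ℂ :=
  Matrix.reindex (Equiv.prodAssoc (Fin 2) (Fin 2) (Fin 2)) (Equiv.prodAssoc (Fin 2) (Fin 2) (Fin 2))
    (Matrix.kroneckerMap (· * ·) (RYB a) (1 : Matrix (Fin 2) (Fin 2) ℂ))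

/-- `I₂ ⊗ R(a)`, a matrix indexed by `Fin 2 × Fin 2 × Fin 2`. -/
noncomputable def RYB23 (a : ℂ) : Matrix (Fin 2 × Fin 2 × Fin 2) (Fin 2 × Fin 2 × Fin 2) ℂ :=
  Matrix.kroneckerMap (· * ·) (1 : Matrix (Fin 2) (Fin 2) ℂ) (RYB a)
def enc3 : Fin 2 × Fin 2 × Fin 2 ≃ Fin 8 where
  toFun p := ⟨4 * p.1.val + 2 * p.2.1.val + p.2.2.val, by omega⟩
  invFun x := (⟨x.val / 4, by omega⟩, ⟨x.val / 2 % 2, by omega⟩, ⟨x.val % 2, by omega⟩)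
  left_inv := by decide
  right_inv := by decide
noncomputable def M12e (a : ℂ) : Matrix (Fin 8) (Fin 8) ℂ :=
  !![a * 1, a * 0, 0 * 1, 0 * 0, 0 * 1, 0 * 0, 0 * 1, 0 * 0;
     a * 0, a * 1, 0 * 0, 0 * 1, 0 * 0, 0 * 1, 0 * 0, 0 * 1;
     0 * 1, 0 * 0, 0 * 1, 0 * 0, a⁻¹ * 1, a⁻¹ * 0, 0 * 1, 0 * 0;
     0 * 0, 0 * 1, 0 * 0, 0 * 1, a⁻¹ * 0, a⁻¹ * 1, 0 * 0, 0 * 1;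
     0 * 1, 0 * 0, a⁻¹ * 1, a⁻¹ * 0, (a - a⁻¹ ^ 3) * 1, (a - a⁻¹ ^ 3) * 0, 0 * 1, 0 * 0;
     0 * 0, 0 * 1, a⁻¹ * 0, a⁻¹ * 1, (a - a⁻¹ ^ 3) * 0, (a - a⁻¹ ^ 3) * 1, 0 * 0, 0 * 1;
     0 * 1, 0 * 0, 0 * 1, 0 * 0, 0 * 1, 0 * 0, a * 1, a * 0;
     0 * 0, 0 * 1, 0 * 0, 0 * 1, 0 * 0, 0 * 1, a * 0, a * 1]

noncomputable def M23e (a : ℂ) : Matrix (Fin 8) (Fin 8) ℂ :=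
  !![1 * a, 1 * 0, 1 * 0, 1 * 0, 0 * a, 0 * 0, 0 * 0, 0 * 0;
     1 * 0, 1 * 0, 1 * a⁻¹, 1 * 0, 0 * 0, 0 * 0, 0 * a⁻¹, 0 * 0;
     1 * 0, 1 * a⁻¹, 1 * (a - a⁻¹ ^ 3), 1 * 0, 0 * 0, 0 * a⁻¹, 0 * (a - a⁻¹ ^ 3), 0 * 0;
     1 * 0, 1 * 0, 1 * 0, 1 * a, 0 * 0, 0 * 0, 0 * 0, 0 * a;
     0 * a, 0 * 0, 0 * 0, 0 * 0, 1 * a, 1 * 0, 1 * 0, 1 * 0;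
     0 * 0, 0 * 0, 0 * a⁻¹, 0 * 0, 1 * 0, 1 * 0, 1 * a⁻¹, 1 * 0;
     0 * 0, 0 * a⁻¹, 0 * (a - a⁻¹ ^ 3), 0 * 0, 1 * 0, 1 * a⁻¹, 1 * (a - a⁻¹ ^ 3), 1 * 0;
     0 * 0, 0 * 0, 0 * 0, 0 * a, 1 * 0, 1 * 0, 1 * 0, 1 * a]
section
variable (a : ℂ)
@[simp] lemma RYB_e_0_0 : RYB a ((0,0) : Fin 2 × Fin 2) ((0,0) : Fin 2 × Fin 2) = a := rfl
@[simp] lemma RYB_e_0_1 : RYB a ((0,0) : Fin 2 × Fin 2) ((0,1) : Fin 2 × Fin 2) = 0 := rfl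
@[simp] lemma RYB_e_0_2 : RYB a ((0,0) : Fin 2 × Fin 2) ((1,0) : Fin 2 × Fin 2) = 0 := rfl
@[simp] lemma RYB_e_0_3 : RYB a ((0,0) : Fin 2 × Fin 2) ((1,1) : Fin 2 × Fin 2) = 0 := rfl
@[simp] lemma RYB_e_1_0 : RYB a ((0,1) : Fin 2 × Fin 2) ((0,0) : Fin 2 × Fin 2) = 0 := rfl
@[simp] lemma RYB_e_1_1 : RYB a ((0,1) : Fin 2 × Fin 2) ((0,1) : Fin 2 × Fin 2) = 0 := rfl
@[simp] lemma RYB_e_1_2 : RYB a ((0,1) : Fin 2 × Fin 2) ((1,0) : Fin 2 × Fin 2) = a⁻¹ := rfl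
@[simp] lemma RYB_e_1_3 : RYB a ((0,1) : Fin 2 × Fin 2) ((1,1) : Fin 2 × Fin 2) = 0 := rfl
@[simp] lemma RYB_e_2_0 : RYB a ((1,0) : Fin 2 × Fin 2) ((0,0) : Fin 2 × Fin 2) = 0 := rfl
@[simp] lemma RYB_e_2_1 : RYB a ((1,0) : Fin 2 × Fin 2) ((0,1) : Fin 2 × Fin 2) = a⁻¹ := rfl
@[simp] lemma RYB_e_2_2 : RYB a ((1,0) : Fin 2 × Fin 2) ((1,0) : Fin 2 × Fin 2) = a - a⁻¹ ^ 3 := rfl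
@[simp] lemma RYB_e_2_3 : RYB a ((1,0) : Fin 2 × Fin 2) ((1,1) : Fin 2 × Fin 2) = 0 := rfl
@[simp] lemma RYB_e_3_0 : RYB a ((1,1) : Fin 2 × Fin 2) ((0,0) : Fin 2 × Fin 2) = 0 := rfl
@[simp] lemma RYB_e_3_1 : RYB a ((1,1) : Fin 2 × Fin 2) ((0,1) : Fin 2 × Fin 2) = 0 := rfl
@[simp] lemma RYB_e_3_2 : RYB a ((1,1) : Fin 2 × Fin 2) ((1,0) : Fin 2 × Fin 2) = 0 := rfl
@[simp] lemma RYB_e_3_3 : RYB a ((1,1) : Fin 2 × Fin 2) ((1,1) : Fin 2 × Fin 2) = a := rfl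
end
lemma h12 (a : ℂ) : RYB12 a = (M12e a).submatrix enc3 enc3 := by
  ext ⟨i, j, k⟩ ⟨l, m, n⟩
  fin_cases i <;> fin_cases j <;> fin_cases k <;> fin_cases l <;> fin_cases m <;> fin_cases n <;> rfl

lemma h23 (a : ℂ) : RYB23 a = (M23e a).submatrix enc3 enc3 := by
  ext ⟨i, j, k⟩ ⟨l, m, n⟩
  fin_cases i <;> fin_cases j <;> fin_cases k <;> fin_cases l <;> fin_cases m <;> fin_cases n <;> rfl

set_option maxHeartbeats 1000000 in
lemma hprod (a : ℂ) (hab : a * a⁻¹ = 1) :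
    M12e a * M23e a * M12e a = M23e a * M12e a * M23e a := by
  rw [← Matrix.ext_iff]
  simp only [M12e, M23e, Matrix.mul_apply, Fin.sum_univ_succ, Fin.forall_fin_succ,
    Matrix.cons_val_zero, Matrix.cons_val_succ, Matrix.cons_val_one, Matrix.head_cons,
    Matrix.of_apply, Finset.univ_unique, Fin.default_eq_zero, Finset.sum_singleton,
    Fin.succ_zero_eq_one, mul_one, mul_zero, one_mul, zero_mul, add_zero, zero_add,
    IsEmpty.forall_iff, and_true]
  and_intros <;>
    first
      | trivial
      | linear_combination (-(a - a⁻¹ ^ 3) * a⁻¹ ^ 2) * hab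
      | linear_combination ((a - a⁻¹ ^ 3) * a⁻¹ ^ 2) * hab
      | ring

theorem RYB_yang_baxter_and_unitary_iff (a : ℂ) (ha : ‖a‖ = 1) :
    (RYB12 a * RYB23 a * RYB12 a = RYB23 a * RYB12 a * RYB23 a) ∧
    (RYB a ∈ Matrix.unitaryGroup (Fin 2 × Fin 2) ℂ ↔ a ^ 4 = 1) ∧
    (a ^ 4 = 1 ↔ a = 1 ∨ a = -1 ∨ a = Complex.I ∨ a = -Complex.I) := by
  have ha0 : a ≠ 0 := by
    intro h; rw [h] at ha; simp at ha
  have hab : a * a⁻¹ = 1 := mul_inv_cancel₀ ha0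
  have hca : a * (starRingEnd ℂ) a = 1 := by
    rw [Complex.mul_conj, Complex.normSq_eq_norm_sq, ha]; norm_num
  have hc : (starRingEnd ℂ) a = a⁻¹ := eq_inv_of_mul_eq_one_right hca
  have hc2 : (starRingEnd ℂ) a⁻¹ = a := by rw [map_inv₀, hc, inv_inv]
  refine ⟨?_, ?_, ?_⟩
  · rw [h12 a, h23 a, Matrix.submatrix_mul_equiv, Matrix.submatrix_mul_equiv,
      Matrix.submatrix_mul_equiv, Matrix.submatrix_mul_equiv, hprod a hab]
  · constructor
    · intro hu
      have h := Matrix.mem_unitaryGroup_iff.mp hu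
      have e : (RYB a * star (RYB a)) (((1, 0)) : Fin 2 × Fin 2) (((0, 1)) : Fin 2 × Fin 2)
          = (1 : Matrix (Fin 2 × Fin 2) (Fin 2 × Fin 2) ℂ) ((1, 0)) ((0, 1)) := by rw [h]
      simp only [Matrix.mul_apply, Fintype.sum_prod_type, Fin.sum_univ_two, Matrix.star_apply,
        Complex.star_def, map_sub, map_pow, hc, hc2, Matrix.one_apply,
        RYB_e_0_0, RYB_e_0_1, RYB_e_0_2, RYB_e_0_3, RYB_e_1_0, RYB_e_1_1, RYB_e_1_2,
        RYB_e_1_3, RYB_e_2_0, RYB_e_2_1, RYB_e_2_2, RYB_e_2_3, RYB_e_3_0, RYB_e_3_1,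
        RYB_e_3_2, RYB_e_3_3, mul_zero, zero_mul, map_zero, add_zero, zero_add,
        Fin.mk_zero, Fin.mk_one, Prod.mk.injEq, zero_ne_one, one_ne_zero, and_false, false_and, and_true, true_and,
        and_self, if_true, if_false, reduceIte] at e
      have e2 : a - a⁻¹ ^ 3 = 0 := by
        rcases mul_eq_zero.mp e with e1 | e1
        · exact e1
        · exact absurd e1 ha0
      field_simp at e2
      linear_combination e2
    · intro h4
      rw [Matrix.mem_unitaryGroup_iff, ← Matrix.ext_iff]
      simp only [Prod.forall]
      intro p q r s
      fin_cases p <;> fin_cases q <;> fin_cases r <;> fin_cases s <;>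
        simp only [Matrix.mul_apply, Fintype.sum_prod_type, Fin.sum_univ_two, Matrix.star_apply,
        Complex.star_def, map_sub, map_pow, hc, hc2, Matrix.one_apply,
        RYB_e_0_0, RYB_e_0_1, RYB_e_0_2, RYB_e_0_3, RYB_e_1_0, RYB_e_1_1, RYB_e_1_2,
        RYB_e_1_3, RYB_e_2_0, RYB_e_2_1, RYB_e_2_2, RYB_e_2_3, RYB_e_3_0, RYB_e_3_1,
        RYB_e_3_2, RYB_e_3_3, mul_zero, zero_mul, map_zero, add_zero, zero_add,
        Fin.mk_zero, Fin.mk_one, Prod.mk.injEq, zero_ne_one, one_ne_zero, and_false, false_and, and_true, true_and,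
        and_self, if_true, if_false, reduceIte] <;>
          first
            | rfl
            | linear_combination ((-1 : ℂ) * a⁻¹ ^ 2 + (-1 : ℂ) * a ^ 2 + (-1 : ℂ) * a ^ 3 * a⁻¹ ^ 1) * hab + ((1 : ℂ) * a⁻¹ ^ 2) * h4
            | linear_combination ((1 : ℂ)) * hab + ((0 : ℂ)) * h4
            | linear_combination ((1 : ℂ) * a ^ 3 * a⁻¹ ^ 1) * hab + ((-1 : ℂ) * a⁻¹ ^ 2) * h4
            | linear_combination ((2 : ℂ) + (-1 : ℂ) * a ^ 3 * a⁻¹ ^ 3) * hab + ((-1 : ℂ) + (1 : ℂ) * a⁻¹ ^ 4) * h4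
            | ring
  · constructor
    · intro h4
      have hz : (a - 1) * (a + 1) * (a - Complex.I) * (a + Complex.I) = 0 := by
        linear_combination h4 - (a ^ 2 - 1) * Complex.I_sq
      rcases mul_eq_zero.mp hz with h | h
      · rcases mul_eq_zero.mp h with h | h
        · rcases mul_eq_zero.mp h with h | h
          · exact Or.inl (by linear_combination h)
          · exact Or.inr (Or.inl (by linear_combination h))
        · exact Or.inr (Or.inr (Or.inl (by linear_combination h)))
      · exact Or.inr (Or.inr (Or.inr (by linear_combination h)))
    · have hI : Complex.I ^ 4 = 1 := by
        rw [show (4 : ℕ) = 2 * 2 from rfl, pow_mul, Complex.I_sq]; norm_num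
      rintro (rfl | rfl | rfl | rfl)
      · norm_num
      · norm_num
      · exact hI
      · rw [show (-Complex.I) ^ 4 = Complex.I ^ 4 by ring]; exact hI
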